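/- Let n be even, Γ a finite abelian group with |Γ| = q, and C₀ ⊆ Γ^n a Γ²-development (n, n-1)-symbol-pair code. For u ∈ C₀ and α, α' ∈ Γ define φ(u, α, α') ∈ Γ^n by adding α to every even-indexed coordinate of u and α' to every odd-indexed coordinate. Then C = { φ(u, α, α') : u ∈ C₀, α, α' ∈ Γ } has size q³ and minimum pair-distance at least n-1; i.e., C is an MDS (n, n-1)_q-symbol-pair code. -/

import Mathlib

/-- The (cyclic) pair-distance between two vectors of length `n`,
with coordinates indexed by `ZMod n`. -/
noncomputable def pairDist {n : ℕ} {σ : Type*} (u v : ZMod n → σ) : ℕ :=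
  {i : ZMod n | (u i, u (i + 1)) ≠ (v i, v (i + 1))}.ncard

/-- The Hamming distance between two vectors of length `n`,
with coordinates indexed by `ZMod n`. -/
noncomputable def hamDist {n : ℕ} {σ : Type*} (u v : ZMod n → σ) : ℕ :=
  {i : ZMod n | u i ≠ v i}.ncard

/-- parity flips when adding one, provided `n` is even. -/
lemma parFlip {n : ℕ} (hn : Even n) (i : ZMod n) :
    (i + 1).val % 2 = (i.val + 1) % 2 := by
  rcases Nat.eq_zero_or_pos n with h0 | hpos
  · subst h0
    revert i; show ∀ i : ℤ, (i + 1).natAbs % 2 = (i.natAbs + 1) % 2; intro i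
    have hA : (i + 1).natAbs % 2 = 0 ↔ ¬ (i.natAbs % 2 = 0) := by
      rw [← Nat.even_iff, ← Nat.even_iff, Int.natAbs_even, Int.natAbs_even, Int.even_add_one]
    omega
  · haveI : NeZero n := ⟨hpos.ne'⟩
    have h2 : 2 ∣ n := hn.two_dvd
    have hn2 : 2 ≤ n := Nat.le_of_dvd hpos h2
    have h1 : (1 : ZMod n).val = 1 := by
      rw [← Nat.cast_one, ZMod.val_natCast]
      exact Nat.mod_eq_of_lt (by omega)
    rw [ZMod.val_add, Nat.mod_mod_of_dvd _ h2, h1]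

lemma key {Γ : Type*} [AddCommGroup Γ] {n : ℕ} (hn : Even n)
    {C₀ : Set (ZMod n → Γ)}
    (hdev1 : ∀ u ∈ C₀, ∀ v ∈ C₀, u ≠ v → ∀ i j : ZMod n, i ≠ j →
      i.val % 2 = j.val % 2 →
      (u i - u j, u (i + 1) - u (j + 1)) ≠ (v i - v j, v (i + 1) - v (j + 1)))
    (hdev2 : ∀ u ∈ C₀, ∀ v ∈ C₀, u ≠ v → ∀ i j : ZMod n, i.val % 2 ≠ j.val % 2 →
      (u i - u (j + 1), u (i + 1) - u j) ≠ (v i - v (j + 1), v (i + 1) - v j))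
    {u v : ZMod n → Γ} (hu : u ∈ C₀) (hv : v ∈ C₀) (huv : u ≠ v)
    (α α' β β' : Γ) {i j : ZMod n} (hij : i ≠ j)
    (h1 : u i + (if i.val % 2 = 0 then α else α')
        = v i + (if i.val % 2 = 0 then β else β'))
    (h2 : u (i + 1) + (if (i + 1).val % 2 = 0 then α else α')
        = v (i + 1) + (if (i + 1).val % 2 = 0 then β else β'))
    (h3 : u j + (if j.val % 2 = 0 then α else α')
        = v j + (if j.val % 2 = 0 then β else β'))
    (h4 : u (j + 1) + (if (j + 1).val % 2 = 0 then α else α')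
        = v (j + 1) + (if (j + 1).val % 2 = 0 then β else β')) :
    False := by
  have sub_of : ∀ a b x y : Γ, a + x = b + y → a - b = y - x := by
    intro a b x y h
    rw [sub_eq_sub_iff_add_eq_add, h, add_comm]
  have G : ∀ (a b : Γ) (c : ℕ),
      a + (if c = 0 then α else α') = b + (if c = 0 then β else β') →
      a - b = (if c = 0 then β - α else β' - α') := by
    intro a b c h
    by_cases hc : c = 0
    · simp only [if_pos hc] at h ⊢; exact sub_of _ _ _ _ h
    · simp only [if_neg hc] at h ⊢; exact sub_of _ _ _ _ h
  have g1 := G _ _ _ h1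
  have g2 := G _ _ _ h2
  have g3 := G _ _ _ h3
  have g4 := G _ _ _ h4
  have pfi := parFlip hn i
  have pfj := parFlip hn j
  by_cases hp : i.val % 2 = j.val % 2
  · have hp' : (i + 1).val % 2 = (j + 1).val % 2 := by omega
    rw [hp] at g1
    rw [hp'] at g2
    have e1 : u i - u j = v i - v j :=
      sub_eq_sub_iff_sub_eq_sub.mp (g1.trans g3.symm)
    have e2 : u (i + 1) - u (j + 1) = v (i + 1) - v (j + 1) :=
      sub_eq_sub_iff_sub_eq_sub.mp (g2.trans g4.symm)
    exact hdev1 u hu v hv huv i j hij hp (by rw [e1, e2])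
  · have hp1 : i.val % 2 = (j + 1).val % 2 := by omega
    have hp2 : (i + 1).val % 2 = j.val % 2 := by omega
    rw [hp1] at g1
    rw [hp2] at g2
    have e1 : u i - u (j + 1) = v i - v (j + 1) :=
      sub_eq_sub_iff_sub_eq_sub.mp (g1.trans g4.symm)
    have e2 : u (i + 1) - u j = v (i + 1) - v j :=
      sub_eq_sub_iff_sub_eq_sub.mp (g2.trans g3.symm)
    exact hdev2 u hu v hv huv i j hp (by rw [e1, e2])

/-- developing a Γ²-development (n, n-1)-symbol-pair code yields an
MDS (n, n-1)_q symbol-pair code. -/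
theorem stmt_16 {Γ : Type*} [AddCommGroup Γ] [Finite Γ] {n q : ℕ} (hn : Even n)
    (hq : Nat.card Γ = q) (C₀ : Set (ZMod n → Γ)) (hsize : C₀.ncard = q)
    (hdev1 : ∀ u ∈ C₀, ∀ v ∈ C₀, u ≠ v → ∀ i j : ZMod n, i ≠ j →
      i.val % 2 = j.val % 2 →
      (u i - u j, u (i + 1) - u (j + 1)) ≠ (v i - v j, v (i + 1) - v (j + 1)))
    (hdev2 : ∀ u ∈ C₀, ∀ v ∈ C₀, u ≠ v → ∀ i j : ZMod n, i.val % 2 ≠ j.val % 2 →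
      (u i - u (j + 1), u (i + 1) - u j) ≠ (v i - v (j + 1), v (i + 1) - v j))
    (C : Set (ZMod n → Γ))
    (hC : C = {w | ∃ u ∈ C₀, ∃ α α' : Γ,
      w = fun i : ZMod n => u i + (if i.val % 2 = 0 then α else α')}) :
    C.ncard = q ^ 3 ∧ ∀ u ∈ C, ∀ v ∈ C, u ≠ v → n - 1 ≤ pairDist u v := by
  classical
  subst hC
  have p0 : (0 : ZMod n).val % 2 = 0 := by rw [ZMod.val_zero]
  have p1 : (1 : ZMod n).val % 2 = 1 := by
    have h := parFlip hn 0
    rw [zero_add, ZMod.val_zero] at h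
    omega
  have h01 : (0 : ZMod n) ≠ 1 := fun h => by rw [h] at p0; omega
  constructor
  · -- cardinality
    set F : ↥C₀ × Γ × Γ → (ZMod n → Γ) :=
      fun t => fun i => (t.1 : ZMod n → Γ) i + (if i.val % 2 = 0 then t.2.1 else t.2.2)
      with hF
    have hinj : Function.Injective F := by
      rintro ⟨⟨u, hu⟩, α, α'⟩ ⟨⟨v, hv⟩, β, β'⟩ h
      simp only [hF] at h
      have hpt : ∀ i : ZMod n,
          u i + (if i.val % 2 = 0 then α else α')
            = v i + (if i.val % 2 = 0 then β else β') := fun i => congrFun h i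
      have huv : u = v := by
        by_contra huv
        exact key hn hdev1 hdev2 hu hv huv α α' β β' h01
          (hpt 0) (hpt (0 + 1)) (hpt 1) (hpt (1 + 1))
      subst huv
      have hab : α = β := by
        have h0 := hpt 0
        simp only [if_pos p0] at h0
        exact add_left_cancel h0
      have hab' : α' = β' := by
        have h1' := hpt 1
        simp only [if_neg (by omega : ¬ ((1 : ZMod n).val % 2 = 0))] at h1'
        exact add_left_cancel h1'
      subst hab; subst hab'
      rfl
    have hrange : {w | ∃ u ∈ C₀, ∃ α α' : Γ,
        w = fun i : ZMod n => u i + (if i.val % 2 = 0 then α else α')}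
        = Set.range F := by
      ext w
      constructor
      · rintro ⟨u, hu, α, α', rfl⟩
        exact ⟨⟨⟨u, hu⟩, α, α'⟩, rfl⟩
      · rintro ⟨⟨⟨u, hu⟩, α, α'⟩, rfl⟩
        exact ⟨u, hu, α, α', rfl⟩
    rw [hrange, ← Nat.card_coe_set_eq, Nat.card_range_of_injective hinj,
      Nat.card_prod, Nat.card_prod, Nat.card_coe_set_eq, hsize, hq]
    ring
  · -- distance
    rintro w hw w' hw' hne
    obtain ⟨u, hu, α, α', hwu⟩ := hw
    obtain ⟨v, hv, β, β', hwv⟩ := hw'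
    have hwa : ∀ i : ZMod n, w i = u i + (if i.val % 2 = 0 then α else α') :=
      fun i => by rw [hwu]
    have hwb : ∀ i : ZMod n, w' i = v i + (if i.val % 2 = 0 then β else β') :=
      fun i => by rw [hwv]
    rcases Nat.eq_zero_or_pos n with h0 | hpos
    · subst h0; omega
    haveI : NeZero n := ⟨hpos.ne'⟩
    unfold pairDist
    set T : Set (ZMod n) := {i | (w i, w (i + 1)) = (w' i, w' (i + 1))} with hT
    have hsub : ∀ a ∈ T, ∀ b ∈ T, a = b := by
      intro a ha b hb
      by_contra hab
      simp only [hT, Set.mem_setOf_eq, Prod.mk.injEq] at ha hb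
      have ka1 : u a + (if a.val % 2 = 0 then α else α')
          = v a + (if a.val % 2 = 0 then β else β') := by
        rw [← hwa a, ← hwb a]; exact ha.1
      have ka2 : u (a + 1) + (if (a + 1).val % 2 = 0 then α else α')
          = v (a + 1) + (if (a + 1).val % 2 = 0 then β else β') := by
        rw [← hwa (a + 1), ← hwb (a + 1)]; exact ha.2
      have kb1 : u b + (if b.val % 2 = 0 then α else α')
          = v b + (if b.val % 2 = 0 then β else β') := by
        rw [← hwa b, ← hwb b]; exact hb.1
      have kb2 : u (b + 1) + (if (b + 1).val % 2 = 0 then α else α')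
          = v (b + 1) + (if (b + 1).val % 2 = 0 then β else β') := by
        rw [← hwa (b + 1), ← hwb (b + 1)]; exact hb.2
      by_cases huv : u = v
      · subst huv
        have pfa := parFlip hn a
        have hab' : α = β ∧ α' = β' := by
          by_cases pa : a.val % 2 = 0
          · have k1 := ka1; simp only [if_pos pa] at k1
            have k2 := ka2; simp only [if_neg (by omega : ¬ ((a + 1).val % 2 = 0))] at k2
            exact ⟨add_left_cancel k1, add_left_cancel k2⟩
          · have k1 := ka1; simp only [if_neg pa] at k1
            have k2 := ka2; simp only [if_pos (by omega : (a + 1).val % 2 = 0)] at k2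
            exact ⟨add_left_cancel k2, add_left_cancel k1⟩
        apply hne
        funext i
        rw [hwa i, hwb i, hab'.1, hab'.2]
      · exact key hn hdev1 hdev2 hu hv huv α α' β β' hab ka1 ka2 kb1 kb2
    have hT1 : T.ncard ≤ 1 := (Set.ncard_le_one (Set.toFinite T)).mpr hsub
    have hcompl : {i : ZMod n | (w i, w (i + 1)) ≠ (w' i, w' (i + 1))} = Tᶜ := by
      ext i
      simp [hT]
    have hsum := Set.ncard_add_ncard_compl T
    have hcard : Nat.card (ZMod n) = n := Nat.card_zmod n
    rw [hcompl]
    omega
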